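/- For all real s, t: (s/2){t+s brace s} − (t/2)∫₀ˢ (∂/∂t){t+u brace u} du = s(C₁(st) + sC₂(st)) = ∑_{m=1}^∞ [s^m t^{m-1}/(m!(m-1)!) + s^{m+1}t^{m-1}/((m+1)!(m-1)!)]. -/

import Mathlib

/-- The real Bessel–Clifford function of the first kind `C_ν(z) = ∑ z^m/(m!(m+ν)!)`. -/
noncomputable def besselCliffordR (ν : ℕ) (z : ℝ) : ℝ :=
  ∑' m : ℕ, z ^ m / ((Nat.factorial m : ℝ) * (Nat.factorial (m + ν) : ℝ))

lemma summable_den (z : ℝ) (d : ℕ → ℝ) (hd : ∀ n, (n.factorial : ℝ) ≤ d n) :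
    Summable fun n => z ^ n / d n := by
  refine Summable.of_norm (Summable.of_nonneg_of_le (fun n => norm_nonneg _) (fun n => ?_)
    (Real.summable_pow_div_factorial |z|))
  have h0 : (0:ℝ) < n.factorial := by positivity
  have h2 : (0:ℝ) < d n := lt_of_lt_of_le h0 (hd n)
  rw [norm_div, norm_pow, Real.norm_eq_abs z, Real.norm_eq_abs, abs_of_pos h2]
  exact div_le_div_of_nonneg_left (by positivity) h0 (hd n)

lemma one_le_fact (n : ℕ) : (1:ℝ) ≤ (n.factorial : ℝ) :=
  Nat.one_le_cast.2 n.factorial_pos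

lemma fact_le_mul_fact (n k : ℕ) (c : ℝ) (hc : (n.factorial : ℝ) ≤ c) :
    (n.factorial : ℝ) ≤ c * (k.factorial : ℝ) := by
  nlinarith [one_le_fact k, one_le_fact n]

lemma summable_bc (ν : ℕ) (z : ℝ) :
    Summable (fun m : ℕ => z ^ m / ((m.factorial : ℝ) * ((m + ν).factorial : ℝ))) :=
  summable_den z _ fun n => fact_le_mul_fact n _ _ le_rfl

lemma summable_shift (z c : ℝ) (d : ℕ → ℝ) (hd : ∀ n, (n.factorial : ℝ) ≤ d n) :
    Summable (fun n => c * z ^ (n+1) / d n) :=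
  ((summable_den z d hd).mul_left (c*z)).congr fun n => by
    rw [mul_div_assoc']; ring_nf

lemma bc_shift_eq (ν : ℕ) (z : ℝ) :
    besselCliffordR ν z
      = 1 / (ν.factorial : ℝ)
        + ∑' m : ℕ, z ^ (m+1) / (((m+1).factorial : ℝ) * ((m + 1 + ν).factorial : ℝ)) := by
  rw [besselCliffordR, Summable.tsum_eq_zero_add (summable_bc ν z)]
  norm_num

lemma summable_bc_deriv (ν : ℕ) (z : ℝ) :
    Summable (fun n : ℕ => (n : ℝ) * z ^ (n-1) / ((n.factorial : ℝ) * ((n + ν).factorial : ℝ))) := by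
  rw [← summable_nat_add_iff 1]
  refine (summable_bc (ν+1) z).congr fun n => ?_
  have h1 : n + 1 + ν = n + (ν + 1) := by omega
  rw [h1, Nat.add_sub_cancel, Nat.factorial_succ]
  have h2 : ((n+1:ℕ):ℝ) ≠ 0 := by positivity
  push_cast
  field_simp

lemma bc_hasDerivAt (ν : ℕ) (z : ℝ) :
    HasDerivAt (besselCliffordR ν) (besselCliffordR (ν+1) z) z := by
  have key : HasDerivAt (fun y : ℝ => ∑' n : ℕ, y ^ n / ((n.factorial : ℝ) * ((n + ν).factorial : ℝ)))
      (∑' n : ℕ, (n : ℝ) * z ^ (n-1) / ((n.factorial : ℝ) * ((n + ν).factorial : ℝ))) z := by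
    refine hasDerivAt_tsum_of_isPreconnected
      (u := fun n : ℕ => (2*(|z|+1)) ^ n / (n.factorial : ℝ))
      (t := Metric.ball (0:ℝ) (|z|+1))
      (g := fun (n : ℕ) (y : ℝ) => y ^ n / ((n.factorial : ℝ) * ((n + ν).factorial : ℝ)))
      (g' := fun (n : ℕ) (y : ℝ) => (n : ℝ) * y ^ (n-1) / ((n.factorial : ℝ) * ((n + ν).factorial : ℝ)))
      (y₀ := z)
      (Real.summable_pow_div_factorial _) Metric.isOpen_ball
      ((convex_ball (0:ℝ) (|z|+1)).isPreconnected)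
      (fun n y _ => (hasDerivAt_pow n y).div_const _)
      (fun n y hy => ?_)
      (Metric.mem_ball.2 (by rw [Real.dist_eq, sub_zero]; linarith [lt_add_one |z|]))
      (summable_bc ν z)
      (Metric.mem_ball.2 (by rw [Real.dist_eq, sub_zero]; linarith [lt_add_one |z|]))
    have hyr : |y| ≤ |z| + 1 := by
      have := Metric.mem_ball.1 hy
      rw [Real.dist_eq, sub_zero] at this
      exact this.le
    have h0 : (0:ℝ) < n.factorial := by positivity
    have hden : (n.factorial : ℝ) ≤ (n.factorial : ℝ) * ((n+ν).factorial : ℝ) :=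
      fact_le_mul_fact n _ _ le_rfl
    rw [Real.norm_eq_abs, abs_div, abs_mul, abs_pow, Nat.abs_cast,
      abs_of_pos (lt_of_lt_of_le h0 hden)]
    have hr1 : (1:ℝ) ≤ |z| + 1 := by nlinarith [abs_nonneg z]
    have hnum : (n:ℝ) * |y| ^ (n-1) ≤ (2*(|z|+1)) ^ n := by
      have hn2 : (n:ℝ) ≤ 2 ^ n := by exact_mod_cast (Nat.lt_two_pow_self (n := n)).le
      have hyp : |y| ^ (n-1) ≤ (|z|+1) ^ (n-1) := pow_le_pow_left₀ (abs_nonneg y) hyr _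
      have hrp : (|z|+1) ^ (n-1) ≤ (|z|+1) ^ n := pow_le_pow_right₀ hr1 (Nat.sub_le n 1)
      calc (n:ℝ) * |y| ^ (n-1) ≤ 2 ^ n * (|z|+1) ^ n := by
            apply mul_le_mul hn2 (hyp.trans hrp) (by positivity) (by positivity)
        _ = (2*(|z|+1)) ^ n := (mul_pow 2 _ n).symm
    exact div_le_div₀ (by positivity) hnum h0 hden
  have heq : (∑' n : ℕ, (n : ℝ) * z ^ (n-1) / ((n.factorial : ℝ) * ((n + ν).factorial : ℝ)))
      = besselCliffordR (ν+1) z := by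
    rw [Summable.tsum_eq_zero_add (summable_bc_deriv ν z), besselCliffordR]
    simp only [Nat.cast_zero, zero_mul, zero_div, zero_add]
    refine tsum_congr fun n => ?_
    rw [show n + 1 + ν = n + (ν + 1) from by omega, Nat.add_sub_cancel, Nat.factorial_succ]
    push_cast
    have h2 : ((n:ℝ)+1) ≠ 0 := by positivity
    field_simp
  rw [heq] at key
  exact key

lemma bc_rec (ν : ℕ) (z : ℝ) :
    besselCliffordR ν z
      = z * besselCliffordR (ν+2) z + ((ν:ℝ)+1) * besselCliffordR (ν+1) z := by
  have e2 : z * besselCliffordR (ν+2) z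
      = ∑' m : ℕ, z ^ (m+1) / ((m.factorial : ℝ) * ((m + ν + 2).factorial : ℝ)) := by
    rw [besselCliffordR, ← tsum_mul_left]
    refine tsum_congr fun m => ?_
    rw [show m + (ν + 2) = m + ν + 2 from by omega, mul_div_assoc']
    ring_nf
  have e1 : besselCliffordR (ν+1) z
      = 1 / (((ν+1).factorial : ℝ))
        + ∑' m : ℕ, z ^ (m+1) / (((m+1).factorial : ℝ) * ((m + ν + 2).factorial : ℝ)) := by
    rw [bc_shift_eq (ν+1) z]
    congr 1
    exact tsum_congr fun m => by rw [show m + 1 + (ν + 1) = m + ν + 2 from by omega]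
  have hs1 : Summable (fun m : ℕ =>
      z ^ (m+1) / ((m.factorial : ℝ) * ((m + ν + 2).factorial : ℝ))) := by
    have := summable_shift z 1 (fun m => (m.factorial : ℝ) * ((m + ν + 2).factorial : ℝ))
      (fun n => fact_le_mul_fact n _ _ le_rfl)
    exact this.congr fun n => by rw [one_mul]
  have hs2 : Summable (fun m : ℕ =>
      ((ν:ℝ)+1) * (z ^ (m+1) / (((m+1).factorial : ℝ) * ((m + ν + 2).factorial : ℝ)))) := by
    have := summable_shift z ((ν:ℝ)+1)
      (fun m => ((m+1).factorial : ℝ) * ((m + ν + 2).factorial : ℝ))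
      (fun n => fact_le_mul_fact n (n + ν + 2) _
        (by exact_mod_cast Nat.factorial_le (Nat.le_succ n)))
    exact this.congr fun n => by rw [mul_div_assoc]
  have hconst : ((ν:ℝ)+1) * (1 / (((ν+1).factorial : ℝ))) = 1 / (ν.factorial : ℝ) := by
    rw [Nat.factorial_succ]
    have h2 : (ν.factorial : ℝ) ≠ 0 := by positivity
    push_cast
    field_simp
  have hsum : (∑' m : ℕ, z ^ (m+1) / (((m+1).factorial : ℝ) * ((m + 1 + ν).factorial : ℝ)))
      = (∑' m : ℕ, z ^ (m+1) / ((m.factorial : ℝ) * ((m + ν + 2).factorial : ℝ)))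
        + ∑' m : ℕ, ((ν:ℝ)+1) * (z ^ (m+1) / (((m+1).factorial : ℝ) * ((m + ν + 2).factorial : ℝ))) := by
    rw [← Summable.tsum_add hs1 hs2]
    refine tsum_congr fun m => ?_
    rw [show m + 1 + ν = m + ν + 1 from by omega,
      show m + ν + 2 = (m + ν + 1) + 1 from rfl, Nat.factorial_succ (m+ν+1), Nat.factorial_succ m]
    have p1 : (m.factorial : ℝ) ≠ 0 := by positivity
    have p2 : (((m+ν+1).factorial) : ℝ) ≠ 0 := by positivity
    push_cast
    field_simp
    ring
  rw [bc_shift_eq ν z, e2, e1, mul_add ((ν:ℝ)+1), hconst, ← tsum_mul_left, hsum]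
  ring

/-- The (real) continuous binomial coefficient `{t brace a}`. -/
noncomputable def contBinomR (t a : ℝ) : ℝ :=
  2 * ∑' n : ℕ, a ^ n * (t - a) ^ n / ((Nat.factorial n : ℝ) ^ 2) +
    t * ∑' n : ℕ, a ^ n * (t - a) ^ n / ((Nat.factorial (n + 1) : ℝ) * (Nat.factorial n : ℝ))

lemma contBinomR_eq (x a : ℝ) :
    contBinomR (x + a) a
      = 2 * besselCliffordR 0 (a * x) + (x + a) * besselCliffordR 1 (a * x) := by
  rw [contBinomR, besselCliffordR, besselCliffordR]
  congr 2
  · refine tsum_congr fun n => ?_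
    rw [add_sub_cancel_right, ← mul_pow, sq]
    norm_num
  · refine tsum_congr fun n => ?_
    rw [add_sub_cancel_right, ← mul_pow, mul_comm (((n+1).factorial : ℝ))]

lemma bc_comp_hasDerivAt (ν : ℕ) (u t : ℝ) :
    HasDerivAt (fun t' : ℝ => besselCliffordR ν (u * t')) (besselCliffordR (ν+1) (u*t) * u) t := by
  have hin : HasDerivAt (fun t' : ℝ => u * t') u t := by
    simpa using (hasDerivAt_id t).const_mul u
  exact (bc_hasDerivAt ν (u*t)).comp t hin

lemma integrand_deriv (t u : ℝ) :
    HasDerivAt (fun t' : ℝ => contBinomR (t' + u) u)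
      ((2*u+1) * besselCliffordR 1 (u*t) + (t+u)*u * besselCliffordR 2 (u*t)) t := by
  have hfun : (fun t' : ℝ => contBinomR (t' + u) u)
      = fun t' : ℝ => 2 * besselCliffordR 0 (u * t') + (t' + u) * besselCliffordR 1 (u * t') := by
    funext t'; exact contBinomR_eq t' u
  rw [hfun]
  have h0 := bc_comp_hasDerivAt 0 u t
  have h1 := bc_comp_hasDerivAt 1 u t
  have := (h0.const_mul 2).add (((hasDerivAt_id t).add_const u).mul h1)
  refine this.congr_deriv ?_
  norm_num
  ring

lemma bc_mul_hasDerivAt (ν : ℕ) (t u : ℝ) :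
    HasDerivAt (fun v : ℝ => besselCliffordR ν (v * t)) (besselCliffordR (ν+1) (u*t) * t) u := by
  have hin : HasDerivAt (fun v : ℝ => v * t) t u := hasDerivAt_mul_const t
  have := (bc_hasDerivAt ν (u*t)).comp u hin
  exact this

noncomputable def Fb (t u : ℝ) : ℝ :=
  (2*u^2+2*u) * besselCliffordR 2 (u*t) + (u^3 + t*u^2) * besselCliffordR 3 (u*t)

lemma Fb_hasDerivAt (t u : ℝ) :
    HasDerivAt (Fb t)
      ((2*u+1) * besselCliffordR 1 (u*t) + (t+u)*u * besselCliffordR 2 (u*t)) u := by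
  have h2 := bc_mul_hasDerivAt 2 t u
  have h3 := bc_mul_hasDerivAt 3 t u
  have q1 : HasDerivAt (fun v : ℝ => 2*v^2+2*v) (4*u+2) u := by
    have h := ((hasDerivAt_pow 2 u).const_mul 2).add ((hasDerivAt_id u).const_mul 2)
    refine h.congr_deriv ?_
    norm_num
    ring
  have q2 : HasDerivAt (fun v : ℝ => v^3 + t*v^2) (3*u^2 + t*(2*u)) u := by
    have h := (hasDerivAt_pow 3 u).add ((hasDerivAt_pow 2 u).const_mul t)
    refine h.congr_deriv ?_
    norm_num
    try ring
  have total := (q1.mul h2).add (q2.mul h3)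
  have e1 := bc_rec 1 (u*t)
  have e2 := bc_rec 2 (u*t)
  norm_num at e1 e2
  refine total.congr_deriv ?_
  linear_combination (-(2*u+1)) * e1 + (-(u*(t+u))) * e2

lemma bc_cont (ν : ℕ) (t : ℝ) : Continuous (fun u : ℝ => besselCliffordR ν (u * t)) :=
  continuous_iff_continuousAt.2 fun u => (bc_mul_hasDerivAt ν t u).continuousAt

lemma integral_eq (s t : ℝ) :
    (∫ u in (0:ℝ)..s, deriv (fun t' : ℝ => contBinomR (t' + u) u) t) = Fb t s - Fb t 0 := by
  rw [intervalIntegral.integral_congr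
    (g := fun u : ℝ => (2*u+1) * besselCliffordR 1 (u*t) + (t+u)*u * besselCliffordR 2 (u*t))
    (fun u _ => (integrand_deriv t u).deriv)]
  refine intervalIntegral.integral_eq_sub_of_hasDerivAt (fun u _ => Fb_hasDerivAt t u) ?_
  apply Continuous.intervalIntegrable
  exact (((continuous_const.mul continuous_id).add continuous_const).mul (bc_cont 1 t)).add
    (((continuous_const.add continuous_id).mul continuous_id).mul (bc_cont 2 t))

theorem contBinom_combination (s t : ℝ) :
    s / 2 * contBinomR (t + s) s -
        t / 2 * ∫ u in (0:ℝ)..s, deriv (fun t' : ℝ => contBinomR (t' + u) u) t =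
      s * (besselCliffordR 1 (s * t) + s * besselCliffordR 2 (s * t)) ∧
    s * (besselCliffordR 1 (s * t) + s * besselCliffordR 2 (s * t)) =
      ∑' m : ℕ,
        (s ^ (m + 1) * t ^ m / ((Nat.factorial (m + 1) : ℝ) * (Nat.factorial m : ℝ)) +
          s ^ (m + 2) * t ^ m / ((Nat.factorial (m + 2) : ℝ) * (Nat.factorial m : ℝ))) := by
  constructor
  · rw [integral_eq s t]
    have hF0 : Fb t 0 = 0 := by norm_num [Fb]
    rw [hF0, sub_zero, contBinomR_eq t s, Fb]
    have e0 := bc_rec 0 (s*t)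
    have e1 := bc_rec 1 (s*t)
    norm_num at e0 e1
    linear_combination s * e0 + (s*(t+s)/2) * e1
  · have hA : Summable (fun m : ℕ =>
        s^(m+1)*t^m/(((m+1).factorial:ℝ) * (m.factorial:ℝ))) :=
      ((summable_bc 1 (s*t)).mul_left s).congr fun m => by rw [mul_pow]; ring
    have hB : Summable (fun m : ℕ =>
        s^(m+2)*t^m/(((m+2).factorial:ℝ) * (m.factorial:ℝ))) :=
      ((summable_bc 2 (s*t)).mul_left (s^2)).congr fun m => by rw [mul_pow]; ring
    have r1 : s * besselCliffordR 1 (s*t)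
        = ∑' m : ℕ, s^(m+1)*t^m/(((m+1).factorial:ℝ)*(m.factorial:ℝ)) := by
      rw [besselCliffordR, ← tsum_mul_left]
      exact tsum_congr fun m => by rw [mul_pow]; ring
    have r2 : s^2 * besselCliffordR 2 (s*t)
        = ∑' m : ℕ, s^(m+2)*t^m/(((m+2).factorial:ℝ)*(m.factorial:ℝ)) := by
      rw [besselCliffordR, ← tsum_mul_left]
      exact tsum_congr fun m => by rw [mul_pow]; ring
    rw [Summable.tsum_add hA hB, ← r1, ← r2]
    ring
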